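/- The improper integral ∫₀¹ (1/r)·((4r cos ϑ - 3r² - 4r² cos²ϑ + 4r³ cos ϑ - r⁴)/(1 - 2r cos ϑ + r²)²) dr equals -1 + 1/(2 - 2cos ϑ) + ((π - ϑ)/2)·cot ϑ - (1/2)·ln(2 - 2cos ϑ), for ϑ ∈ (0, π). -/

import Mathlib

open Real

theorem integral_I0_n3 (ϑ : ℝ) (hϑ : ϑ ∈ Set.Ioo 0 Real.pi) :
    (∫ r in (0:ℝ)..1, (1 / r) *
        ((4 * r * Real.cos ϑ - 3 * r ^ 2 - 4 * r ^ 2 * Real.cos ϑ ^ 2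
            + 4 * r ^ 3 * Real.cos ϑ - r ^ 4)
          / (1 - 2 * r * Real.cos ϑ + r ^ 2) ^ 2))
      = -1 + 1 / (2 - 2 * Real.cos ϑ)
        + (Real.pi - ϑ) / 2 * (Real.cos ϑ / Real.sin ϑ)
        - 1 / 2 * Real.log (2 - 2 * Real.cos ϑ) := by
  obtain ⟨h0, hπ⟩ := hϑ
  set c := Real.cos ϑ with hc
  set s := Real.sin ϑ with hs
  have hspos : 0 < s := Real.sin_pos_of_pos_of_lt_pi h0 hπ
  have hsc : s ^ 2 + c ^ 2 = 1 := Real.sin_sq_add_cos_sq ϑ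
  have hc1 : c < 1 := by nlinarith
  have hD : ∀ r : ℝ, 0 < 1 - 2 * r * c + r ^ 2 := by
    intro r; nlinarith [sq_nonneg (r - c), mul_pos hspos hspos]
  set F : ℝ → ℝ := fun r =>
    -(1 / 2) * Real.log (1 - 2 * r * c + r ^ 2)
      + c / s * Real.arctan ((r - c) / s)
      + (1 - 2 * r * c + r ^ 2)⁻¹ with hF
  set g : ℝ → ℝ := fun r =>
    (2 * c - r) / (1 - 2 * r * c + r ^ 2)
      + (2 * c - 2 * r) / (1 - 2 * r * c + r ^ 2) ^ 2 with hg
  have hpoly : Continuous fun r : ℝ => 1 - 2 * r * c + r ^ 2 := by continuity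
  have hDerivAll : ∀ r : ℝ, HasDerivAt F (g r) r := by
    intro r
    have hDr := hD r
    have hd : HasDerivAt (fun x : ℝ => 1 - 2 * x * c + x ^ 2) (2 * r - 2 * c) r := by
      have h := ((hasDerivAt_id r).const_mul (2 * c)).const_sub 1
      have h2 := h.add (hasDerivAt_pow 2 r)
      have he : (fun x : ℝ => 1 - 2 * c * id x + x ^ 2)
          = fun x : ℝ => 1 - 2 * x * c + x ^ 2 := by funext x; simp; ring
      rw [show ((fun x : ℝ => 1 - 2 * c * id x) + fun x : ℝ => x ^ 2) = fun x : ℝ => 1 - 2 * c * id x + x ^ 2 from rfl, he] at h2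
      refine h2.congr_deriv ?_
      push_cast; ring
    have h1 : HasDerivAt (fun r : ℝ => -(1 / 2) * Real.log (1 - 2 * r * c + r ^ 2))
        (-(1 / 2) * ((2 * r - 2 * c) / (1 - 2 * r * c + r ^ 2))) r :=
      (hd.log hDr.ne').const_mul _
    have h2 : HasDerivAt (fun r : ℝ => c / s * Real.arctan ((r - c) / s))
        (c / s * ((1 / (1 + ((r - c) / s) ^ 2)) * (1 / s))) r := by
      have hin : HasDerivAt (fun r : ℝ => (r - c) / s) (1 / s) r := by
        have := ((hasDerivAt_id r).sub_const c).div_const s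
        simpa using this
      exact (hin.arctan).const_mul _
    have h3 : HasDerivAt (fun r : ℝ => (1 - 2 * r * c + r ^ 2)⁻¹)
        (-(2 * r - 2 * c) / (1 - 2 * r * c + r ^ 2) ^ 2) r := hd.inv hDr.ne'
    have hsum := (h1.add h2).add h3
    rw [hF, hg]
    refine hsum.congr_deriv ?_
    have hq : 1 + ((r - c) / s) ^ 2 = (1 - 2 * r * c + r ^ 2) / s ^ 2 := by
      field_simp; nlinarith
    rw [hq]
    field_simp
    ring
  have hg_cont : Continuous g := by
    rw [hg]
    apply Continuous.add
    · exact (continuous_const.sub continuous_id).div hpoly fun r => (hD r).ne'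
    · exact ((continuous_const.sub (continuous_const.mul continuous_id)) :
        Continuous fun r : ℝ => 2 * c - 2 * r).div (hpoly.pow 2)
        fun r => (pow_pos (hD r) 2).ne'
  set f : ℝ → ℝ := fun r => (1 / r) *
        ((4 * r * c - 3 * r ^ 2 - 4 * r ^ 2 * c ^ 2 + 4 * r ^ 3 * c - r ^ 4)
          / (1 - 2 * r * c + r ^ 2) ^ 2) with hf
  have hfg : ∀ r : ℝ, r ≠ 0 → f r = g r := by
    intro r hr
    have hDr := (hD r).ne'
    rw [hf, hg]; field_simp; ring
  have hae : f =ᵐ[MeasureTheory.volume] g := by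
    filter_upwards [MeasureTheory.compl_mem_ae_iff.mpr
      (MeasureTheory.measure_singleton (0 : ℝ))] with r hr
    exact hfg r hr
  have hint : IntervalIntegrable f MeasureTheory.volume 0 1 :=
    (hg_cont.intervalIntegrable 0 1).congr_ae (MeasureTheory.ae_restrict_of_ae hae.symm)
  have hderiv : ∀ r ∈ Set.Ioo (0:ℝ) 1, HasDerivAt F (f r) r := by
    intro r hr
    rw [hfg r hr.1.ne']
    exact hDerivAll r
  have hFcont : ContinuousOn F (Set.Icc 0 1) := by
    apply Continuous.continuousOn
    rw [hF]
    refine (Continuous.add ?_ ?_).add ?_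
    · exact continuous_const.mul (hpoly.log fun r => (hD r).ne')
    · exact continuous_const.mul (Real.continuous_arctan.comp
        ((continuous_id.sub continuous_const).div_const s))
    · exact hpoly.inv₀ fun r => (hD r).ne'
  have key : (∫ r in (0:ℝ)..1, f r) = F 1 - F 0 :=
    intervalIntegral.integral_eq_sub_of_hasDerivAt_of_le zero_le_one hFcont hderiv hint
  rw [key]
  -- arctan values
  have hhalf : ϑ = 2 * (ϑ / 2) := by ring
  have hsin2 : s = 2 * Real.sin (ϑ / 2) * Real.cos (ϑ / 2) := by
    rw [hs, hhalf, Real.sin_two_mul]; ring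
  have hcos2 : c = 1 - 2 * Real.sin (ϑ / 2) ^ 2 := by
    rw [hc]; nth_rewrite 1 [hhalf]; rw [Real.cos_two_mul']
    linarith [Real.sin_sq_add_cos_sq (ϑ / 2)]
  have hsh : 0 < Real.sin (ϑ / 2) := Real.sin_pos_of_pos_of_lt_pi (by linarith)
    (by linarith [Real.pi_pos])
  have hch : 0 < Real.cos (ϑ / 2) := Real.cos_pos_of_mem_Ioo
    ⟨by linarith [Real.pi_pos], by linarith⟩
  have harc1 : Real.arctan ((1 - c) / s) = ϑ / 2 := by
    have ht : (1 - c) / s = Real.tan (ϑ / 2) := by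
      rw [Real.tan_eq_sin_div_cos, hsin2, hcos2]
      field_simp; ring
    rw [ht, Real.arctan_tan (by linarith [Real.pi_pos]) (by linarith)]
  have harc0 : Real.arctan ((0 - c) / s) = ϑ - Real.pi / 2 := by
    have ht : (0 - c) / s = Real.tan (ϑ - Real.pi / 2) := by
      rw [Real.tan_eq_sin_div_cos, Real.sin_sub_pi_div_two, Real.cos_sub_pi_div_two, ← hc, ← hs]
      ring
    rw [ht, Real.arctan_tan (by linarith) (by linarith [Real.pi_pos])]
  rw [hF]
  simp only
  rw [show (1 : ℝ) - 2 * 1 * c + 1 ^ 2 = 2 - 2 * c by ring,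
      show (1 : ℝ) - 2 * 0 * c + 0 ^ 2 = 1 by ring, harc1, harc0]
  rw [Real.log_one]
  have h2c : (2 : ℝ) - 2 * c ≠ 0 := by linarith
  field_simp
  ring
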